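/- Let L₁₂ be a seminorm on M₁ ⊕ M₂ restricting to L₁ on M₁⊕{0} and L₂ on {0}⊕M₂, and L₂₃ a seminorm on M₂ ⊕ M₃ restricting to L₂ and L₃. Then L₁₃(x₁, x₃) := inf_{x₂ ∈ M₂}( L₁₂(x₁, −x₂) + L₂₃(x₂, x₃) ) defines a seminorm on M₁ ⊕ M₃ with L₁₃(x₁, 0) = L₁(x₁) and L₁₃(0, x₃) = L₃(x₃). -/

import Mathlib

/-- Given seminorms `L₁₂` on `M₁ ⊕ M₂` and `L₂₃` on `M₂ ⊕ M₃` restricting to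
`L₁, L₂` and `L₂, L₃` respectively, the formula
`L₁₃(x₁,x₃) := inf_{x₂} (L₁₂(x₁,−x₂) + L₂₃(x₂,x₃))` defines a seminorm on `M₁ ⊕ M₃` with
`L₁₃(x₁,0) = L₁(x₁)` and `L₁₃(0,x₃) = L₃(x₃)`. -/
theorem stmt8 {M₁ M₂ M₃ : Type*}
    [NormedAddCommGroup M₁] [NormedSpace ℝ M₁]
    [NormedAddCommGroup M₂] [NormedSpace ℝ M₂]
    [NormedAddCommGroup M₃] [NormedSpace ℝ M₃]
    (L₁ : M₁ → ℝ) (L₂ : M₂ → ℝ) (L₃ : M₃ → ℝ)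
    (L₁₂ : M₁ × M₂ → ℝ) (L₂₃ : M₂ × M₃ → ℝ)
    -- L₁₂ is a seminorm restricting to L₁ and L₂:
    (h12nonneg : ∀ z, 0 ≤ L₁₂ z)
    (h12add : ∀ z w, L₁₂ (z + w) ≤ L₁₂ z + L₁₂ w)
    (h12smul : ∀ (c : ℝ) z, L₁₂ (c • z) = |c| * L₁₂ z)
    (h12l : ∀ x : M₁, L₁₂ (x, 0) = L₁ x) (h12r : ∀ y : M₂, L₁₂ (0, y) = L₂ y)
    -- L₂₃ is a seminorm restricting to L₂ and L₃:
    (h23nonneg : ∀ z, 0 ≤ L₂₃ z)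
    (h23add : ∀ z w, L₂₃ (z + w) ≤ L₂₃ z + L₂₃ w)
    (h23smul : ∀ (c : ℝ) z, L₂₃ (c • z) = |c| * L₂₃ z)
    (h23l : ∀ y : M₂, L₂₃ (y, 0) = L₂ y) (h23r : ∀ w : M₃, L₂₃ (0, w) = L₃ w)
    (L₁₃ : M₁ × M₃ → ℝ)
    (hdef : ∀ x₁ x₃, L₁₃ (x₁, x₃) = ⨅ x₂ : M₂, (L₁₂ (x₁, -x₂) + L₂₃ (x₂, x₃))) :
    (∀ z, 0 ≤ L₁₃ z) ∧
    (∀ z w, L₁₃ (z + w) ≤ L₁₃ z + L₁₃ w) ∧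
    (∀ (c : ℝ) z, L₁₃ (c • z) = |c| * L₁₃ z) ∧
    (∀ x₁ : M₁, L₁₃ (x₁, 0) = L₁ x₁) ∧ (∀ x₃ : M₃, L₁₃ (0, x₃) = L₃ x₃) := by
  have hbdd : ∀ (x₁ : M₁) (x₃ : M₃),
      BddBelow (Set.range fun x₂ : M₂ => L₁₂ (x₁, -x₂) + L₂₃ (x₂, x₃)) := by
    intro x₁ x₃
    refine ⟨0, ?_⟩
    rintro _ ⟨x₂, rfl⟩
    exact add_nonneg (h12nonneg _) (h23nonneg _)
  have h12zero : L₁₂ (0, 0) = 0 := by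
    have := h12smul 0 (0, 0)
    exact (by simpa using this : L₁₂ 0 = 0)
  have hL20 : L₂ 0 = 0 := by rw [← h12r]; simpa using h12zero
  have hL2neg : ∀ y : M₂, L₂ (-y) = L₂ y := by
    intro y
    have := h12smul (-1) (0, y)
    rw [h12r] at this
    simpa [h12r] using this
  -- nonnegativity
  have hnn : ∀ z, 0 ≤ L₁₃ z := by
    intro z
    rw [show z = (z.1, z.2) from rfl, hdef]
    exact Real.iInf_nonneg fun x₂ => add_nonneg (h12nonneg _) (h23nonneg _)
  have hle : ∀ (x₁ : M₁) (x₃ : M₃) (x₂ : M₂),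
      L₁₃ (x₁, x₃) ≤ L₁₂ (x₁, -x₂) + L₂₃ (x₂, x₃) := by
    intro x₁ x₃ x₂
    rw [hdef]
    exact ciInf_le (hbdd x₁ x₃) x₂
  -- subadditivity
  have hadd : ∀ z w, L₁₃ (z + w) ≤ L₁₃ z + L₁₃ w := by
    rintro ⟨z₁, z₃⟩ ⟨w₁, w₃⟩
    rw [hdef z₁ z₃, hdef w₁ w₃]
    refine le_ciInf_add_ciInf ?_
    intro a b
    have h1 : L₁₂ (z₁ + w₁, -(a + b)) ≤ L₁₂ (z₁, -a) + L₁₂ (w₁, -b) := by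
      have := h12add (z₁, -a) (w₁, -b)
      simpa [Prod.ext_iff, neg_add, add_comm] using this
    have h2 : L₂₃ (a + b, z₃ + w₃) ≤ L₂₃ (a, z₃) + L₂₃ (b, w₃) := by
      have := h23add (a, z₃) (b, w₃)
      simpa [Prod.ext_iff] using this
    calc L₁₃ ((z₁, z₃) + (w₁, w₃)) ≤ L₁₂ (z₁ + w₁, -(a + b)) + L₂₃ (a + b, z₃ + w₃) :=
          hle _ _ _
      _ ≤ _ := by linarith
  -- smul inequality
  have hzero : L₁₃ (0, 0) = 0 := by
    have h1 : L₁₃ ((0 : M₁), (0 : M₃)) ≤ L₁₂ (0, -0) + L₂₃ (0, 0) := hle 0 0 0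
    have h2 : L₂₃ ((0 : M₂), (0 : M₃)) = 0 := by rw [h23l]; exact hL20
    have h3 := hnn ((0 : M₁), (0 : M₃))
    simp only [neg_zero, h12zero, h2] at h1
    linarith
  have hsmul_le : ∀ (c : ℝ) z, L₁₃ (c • z) ≤ |c| * L₁₃ z := by
    rintro c ⟨z₁, z₃⟩
    rcases eq_or_ne c 0 with rfl | hc
    · rw [show ((0:ℝ) • ((z₁, z₃) : M₁ × M₃)) = ((0 : M₁), (0 : M₃)) by simp; rfl, hzero]
      simp
    · have hc' : 0 < |c| := abs_pos.mpr hc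
      rw [← div_le_iff₀' hc', hdef z₁ z₃]
      refine le_ciInf fun x₂ => ?_
      rw [div_le_iff₀' hc']
      calc L₁₃ (c • (z₁, z₃)) ≤ L₁₂ (c • z₁, -(c • x₂)) + L₂₃ (c • x₂, c • z₃) := hle _ _ _
        _ = |c| * (L₁₂ (z₁, -x₂) + L₂₃ (x₂, z₃)) := by
            rw [mul_add, ← h12smul, ← h23smul]
            simp [Prod.smul_mk, smul_neg]
  have hsmul : ∀ (c : ℝ) z, L₁₃ (c • z) = |c| * L₁₃ z := by
    intro c z
    rcases eq_or_ne c 0 with rfl | hc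
    · have : ((0:ℝ) • z) = ((0 : M₁), (0 : M₃)) := by simp [Prod.ext_iff]
      rw [this, hzero]; simp
    · refine le_antisymm (hsmul_le c z) ?_
      have := hsmul_le c⁻¹ (c • z)
      rw [inv_smul_smul₀ hc, abs_inv] at this
      have hc' : 0 < |c| := abs_pos.mpr hc
      calc |c| * L₁₃ z ≤ |c| * (|c|⁻¹ * L₁₃ (c • z)) := by
            exact mul_le_mul_of_nonneg_left this hc'.le
        _ = L₁₃ (c • z) := by field_simp
  refine ⟨hnn, hadd, hsmul, ?_, ?_⟩
  · intro x₁
    refine le_antisymm ?_ ?_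
    · have := hle x₁ 0 0
      rw [neg_zero, h12l, h23l, hL20] at this
      linarith
    · rw [hdef]
      refine le_ciInf fun x₂ => ?_
      have h1 : L₁₂ (x₁, 0) ≤ L₁₂ (x₁, -x₂) + L₁₂ (0, x₂) := by
        have := h12add (x₁, -x₂) (0, x₂)
        simpa [Prod.ext_iff] using this
      have h2 : L₂ x₂ ≤ L₂₃ (x₂, 0) + 0 := by rw [h23l]; simp
      rw [← h12l x₁]
      rw [h12r] at h1
      have := h23l x₂
      linarith
  · intro x₃
    refine le_antisymm ?_ ?_
    · have := hle 0 x₃ 0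
      rw [neg_zero, h12zero, h23r] at this
      linarith
    · rw [hdef]
      refine le_ciInf fun x₂ => ?_
      have h1 : L₂₃ (0, x₃) ≤ L₂₃ (x₂, x₃) + L₂₃ (-x₂, 0) := by
        have := h23add (x₂, x₃) (-x₂, 0)
        simpa [Prod.ext_iff] using this
      have h2 : L₂₃ ((-x₂ : M₂), 0) = L₂ x₂ := by rw [h23l, hL2neg]
      have h3 : L₁₂ ((0 : M₁), -x₂) = L₂ x₂ := by rw [h12r, hL2neg]
      rw [← h23r x₃]
      linarith
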